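/- Let S be a k-shredder of G captured in the following sense: x is a vertex in a component of G \ S other than the largest-volume component C, and Π is a set of k openly-disjoint simple paths from x each ending at a vertex of C. Then no bridge of Π straddles S. -/

import Mathlib

open SimpleGraph

variable {V : Type*}

/-- The graph `G` with the vertices of `S` removed (vertices in `S` become isolated). -/
def delAdj (G : SimpleGraph V) (S : Set V) : SimpleGraph V where
  Adj u v := G.Adj u v ∧ u ∉ S ∧ v ∉ S
  symm := ⟨fun u v ⟨h, hu, hv⟩ => ⟨h.symm, hv, hu⟩⟩
  loopless := ⟨fun v h => G.loopless.irrefl v h.1⟩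

/-- The subgraph of `G` induced on the vertex set `A` (other vertices become isolated). -/
def restrict (G : SimpleGraph V) (A : Set V) : SimpleGraph V where
  Adj u v := G.Adj u v ∧ u ∈ A ∧ v ∈ A
  symm := ⟨fun u v ⟨h, hu, hv⟩ => ⟨h.symm, hv, hu⟩⟩
  loopless := ⟨fun v h => G.loopless.irrefl v h.1⟩

/-- `C` is a connected component of `G \ S`. -/
def IsComp (G : SimpleGraph V) (S C : Set V) : Prop :=
  ∃ v, v ∉ S ∧ C = {u | (delAdj G S).Reachable v u}

/-- The number of connected components of `G \ S`. -/
noncomputable def numComp (G : SimpleGraph V) (S : Set V) : ℕ :=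
  {C : Set V | IsComp G S C}.ncard

/-- The volume of a vertex set `Q`: the number of edges with at least one endpoint in `Q`. -/
noncomputable def vol (G : SimpleGraph V) (Q : Set V) : ℕ :=
  {e ∈ G.edgeSet | ∃ v ∈ Q, v ∈ e}.ncard

/-- `S` is a `k`-shredder: it has `k` vertices and `G \ S` has at least three components. -/
def IsShredder (G : SimpleGraph V) (k : ℕ) (S : Set V) : Prop :=
  S.ncard = k ∧ 3 ≤ numComp G S

/-- `G` is `k`-vertex-connected: it has more than `k` vertices and stays connected
after removing any set of fewer than `k` vertices. -/
def KConnected (G : SimpleGraph V) (k : ℕ) [Fintype V] : Prop :=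
  k < Fintype.card V ∧
    ∀ S : Set V, S.ncard < k → ∀ u v, u ∉ S → v ∉ S → (delAdj G S).Reachable u v

/-- `u` is an ancestor of `v` (or equal to it) in the tree `T` rooted at `r`:
every walk from the root to `v` passes through `u`. -/
def AncOf (T : SimpleGraph V) (r u v : V) : Prop :=
  ∀ p : T.Walk r v, u ∈ p.support

/-- `IsDFSTree G W r T` : `T` is a spanning tree of the induced graph `G[W]` that can be
produced by a depth-first search from `r ∈ W`:  DFS picks a neighbor `w` of `r`, recursively
explores the whole component of `w` in `G[W \ {r}]`, and then continues from `r` on the rest. -/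
inductive IsDFSTree (G : SimpleGraph V) : Set V → V → SimpleGraph V → Prop
  | single (r : V) : IsDFSTree G {r} r ⊥
  | step (W : Set V) (r w : V) (T₁ T₂ : SimpleGraph V)
      (hr : r ∈ W) (hw : w ∈ W) (hadj : G.Adj r w)
      (hT₁ : IsDFSTree G {u | (restrict G (W \ {r})).Reachable w u} w T₁)
      (hT₂ : IsDFSTree G (W \ {u | (restrict G (W \ {r})).Reachable w u}) r T₂) :
      IsDFSTree G W r (T₁ ⊔ T₂ ⊔ fromEdgeSet {s(r, w)})

/-- `C` is an internal component of `T \ U`: a component whose root (its vertex closest to the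
root `r` of `T`, i.e. the vertex of `C` that is an ancestor of all of `C`) is an ancestor of
some vertex of `U`. -/
def InternalComp (T : SimpleGraph V) (r : V) (U C : Set V) : Prop :=
  IsComp T U C ∧ ∃ ρ ∈ C, (∀ v ∈ C, AncOf T r ρ v) ∧ ∃ u ∈ U, AncOf T r ρ u

/-- `Straddles sup A S`: the set `A` (attachments of a bridge, or a candidate) straddles `S`
with respect to the paths whose supports are `sup i`: on some path an `A`-vertex strictly
precedes an `S`-vertex, and on some path an `A`-vertex strictly succeeds an `S`-vertex. -/
def Straddles [DecidableEq V] {k : ℕ} (sup : Fin k → List V) (A S : Set V) : Prop :=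
  (∃ i, ∃ u ∈ A, u ∈ sup i ∧ ∃ s ∈ S, s ∈ sup i ∧
      (sup i).idxOf u < (sup i).idxOf s) ∧
  (∃ j, ∃ v ∈ A, v ∈ sup j ∧ ∃ s ∈ S, s ∈ sup j ∧
      (sup j).idxOf s < (sup j).idxOf v)

/-- `IsBridgeAttach G PiV pedges Γ A` : `Γ` is a bridge of the path system with vertex set
`PiV` and edge lists `pedges i`, and `A` is its attachment set.  A bridge is either a
connected component of `G \ PiV` (attachments: its neighborhood), or an edge of `G` not on
any of the paths but with both endpoints on the paths (attachments: its two endpoints). -/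
def IsBridgeAttach (G : SimpleGraph V) {k : ℕ} (PiV : Set V)
    (pedges : Fin k → List (Sym2 V)) (Γ A : Set V) : Prop :=
  (IsComp G PiV Γ ∧ A = {v | v ∉ Γ ∧ ∃ u ∈ Γ, G.Adj u v}) ∨
  (∃ u v, G.Adj u v ∧ u ∈ PiV ∧ v ∈ PiV ∧ (∀ i, s(u, v) ∉ pedges i) ∧
    Γ = {u, v} ∧ A = {u, v})

private lemma walk_delAdj {G : SimpleGraph V} {S : Set V} {a b : V} (w : G.Walk a b)
    (h : ∀ v ∈ w.support, v ∉ S) : (delAdj G S).Reachable a b := by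
  induction w with
  | nil => exact Reachable.refl _
  | cons hadj q ih =>
    refine Reachable.trans (Adj.reachable ?_) (ih fun v hv => h v (by simp [hv]))
    exact ⟨hadj, h _ (by simp), h _ (by simp)⟩

private lemma delAdj_reach_mem {G : SimpleGraph V} {S : Set V} {a b : V}
    (h : (delAdj G S).Reachable a b) (hb : b ∈ S) : a = b := by
  obtain ⟨w⟩ := h
  induction w with
  | nil => rfl
  | cons hadj q ih => exact absurd hb (ih hb ▸ hadj.2.2)

private lemma delAdj_mono {G : SimpleGraph V} {S T : Set V} (h : S ⊆ T) :
    delAdj G T ≤ delAdj G S :=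
  fun _ _ huv => ⟨huv.1, fun hs => huv.2.1 (h hs), fun hs => huv.2.2 (h hs)⟩

private lemma indexOf_le_getLast [DecidableEq V] {l : List V} (hl : l ≠ [])
    (hnd : l.Nodup) : ∀ w ∈ l, l.idxOf w ≤ l.idxOf (l.getLast hl) := by
  obtain ⟨l', a, rfl⟩ := (List.eq_nil_or_concat l).resolve_left hl
  intro w hw
  have ha : a ∉ l' := by
    rw [List.concat_eq_append, List.nodup_append] at hnd
    exact fun h => hnd.2.2 a h a (List.mem_singleton_self a) rfl
  have h1 : (l'.concat a).getLast hl = a := List.getLast_concat' l' 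
  rw [h1, List.concat_eq_append, List.idxOf_append_of_notMem ha, List.idxOf_cons_self]
  have h2 : (l'.concat a).idxOf w < (l'.concat a).length := List.idxOf_lt_length_iff.mpr hw
  simp only [List.concat_eq_append, List.length_append, List.length_cons, List.length_nil] at h2 ⊢
  omega

private lemma takeUntil_avoid {G : SimpleGraph V} [DecidableEq V] {S : Set V} {x e : V}
    (p : G.Walk x e) (hp : p.IsPath) {u s : V} (hu : u ∈ p.support)
    (huniq : ∀ w ∈ S, w ∈ p.support → w = s)
    (hlt : p.support.idxOf u < p.support.idxOf s) :
    ∀ w ∈ (p.takeUntil u hu).support, w ∉ S := by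
  intro w hw hwS
  have hws : w = s := huniq w hwS (p.support_takeUntil_subset hu hw)
  subst hws
  have hsupp : p.support = (p.takeUntil u hu).support ++ (p.dropUntil u hu).support.tail := by
    conv_lhs => rw [← p.take_spec hu]
    exact Walk.support_append _ _
  set q := p.takeUntil u hu with hq
  have hnd : q.support.Nodup := by
    have h := hp.support_nodup; rw [hsupp, List.nodup_append] at h; exact h.1
  have huq : u ∈ q.support := q.end_mem_support
  have hne : q.support ≠ [] := q.support_ne_nil
  have hglast : q.support.getLast hne = u := q.getLast_support
  have h3 := indexOf_le_getLast hne hnd w hw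
  rw [hglast] at h3
  rw [hsupp, List.idxOf_append_of_mem hw, List.idxOf_append_of_mem huq] at hlt
  omega

private lemma dropUntil_avoid {G : SimpleGraph V} [DecidableEq V] {S : Set V} {x e : V}
    (p : G.Walk x e) (hp : p.IsPath) {v s : V} (hv : v ∈ p.support)
    (huniq : ∀ w ∈ S, w ∈ p.support → w = s)
    (hlt : p.support.idxOf s < p.support.idxOf v) :
    ∀ w ∈ (p.dropUntil v hv).support, w ∉ S := by
  intro w hw hwS
  have hws : w = s := huniq w hwS (p.support_dropUntil_subset hv hw)
  subst hws
  have hsupp : p.support = (p.takeUntil v hv).support ++ (p.dropUntil v hv).support.tail := by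
    conv_lhs => rw [← p.take_spec hv]
    exact Walk.support_append _ _
  set q := p.takeUntil v hv with hq
  set r := p.dropUntil v hv with hr
  have hvq : v ∈ q.support := q.end_mem_support
  have hvlt : p.support.idxOf v < q.support.length := by
    rw [hsupp, List.idxOf_append_of_mem hvq]
    exact lt_of_lt_of_le (List.idxOf_lt_length_iff.mpr hvq) le_rfl
  have hw' : w = v ∨ w ∈ r.support.tail := by
    rw [r.support_eq_cons] at hw
    exact List.mem_cons.mp hw
  rcases hw' with rfl | hwt
  · omega
  · have hwq : w ∉ q.support := by
      have h := hp.support_nodup; rw [hsupp, List.nodup_append] at h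
      exact fun hmem => h.2.2 w hmem w hwt rfl
    have h4 : q.support.length ≤ p.support.idxOf w := by
      rw [hsupp, List.idxOf_append_of_notMem hwq]; omega
    omega

/-- if a `k`-shredder `S` is captured — `x` lies in a component of `G \ S` other
than the largest-volume component `C`, and `Π` is a family of `k` openly-disjoint paths from
`x` ending in `C` — then no bridge of `Π` straddles `S`. -/
theorem stmt_9 [Fintype V] [DecidableEq V] (G : SimpleGraph V) (k : ℕ)
    (hG : KConnected G k) (S : Set V) (hS : IsShredder G k S)
    (C : Set V) (hC : IsComp G S C) (hCmax : ∀ C', IsComp G S C' → vol G C' ≤ vol G C)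
    (x : V) (hx : x ∉ S) (hxC : x ∉ C)
    (ends : Fin k → V) (hends : ∀ i, ends i ∈ C)
    (p : ∀ i, G.Walk x (ends i)) (hp : ∀ i, (p i).IsPath)
    (hdisj : ∀ i j, i ≠ j → ∀ v, v ∈ (p i).support → v ∈ (p j).support →
      v = x ∨ (v = ends i ∧ v = ends j))
    (hone : ∀ i, (S ∩ {v | v ∈ (p i).support}).ncard = 1) :
    ∀ Γ A,
      IsBridgeAttach G {v | ∃ i, v ∈ (p i).support} (fun i => (p i).edges) Γ A →
        ¬ Straddles (fun i => (p i).support) A S := by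
  obtain ⟨v₀, hv₀S, hCdef⟩ := hC
  -- unique S-vertex on each path
  have hsi' : ∀ i, ∃ a, S ∩ {v | v ∈ (p i).support} = {a} :=
    fun i => Set.ncard_eq_one.mp (hone i)
  choose si hsi using hsi'
  have hsimem : ∀ i, si i ∈ S ∩ {v | v ∈ (p i).support} :=
    fun i => (hsi i).symm ▸ Set.mem_singleton (si i)
  have hsiS : ∀ i, si i ∈ S := fun i => (hsimem i).1
  have hsiP : ∀ i, si i ∈ (p i).support := fun i => (hsimem i).2
  have huniq : ∀ i, ∀ w ∈ S, w ∈ (p i).support → w = si i := by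
    intro i w hw hw2
    have hmem : w ∈ S ∩ {v | v ∈ (p i).support} := ⟨hw, hw2⟩
    rw [hsi i] at hmem
    exact hmem
  -- no vertex of C is in S
  have hCS : ∀ c ∈ C, c ∉ S := by
    intro c hc hcS
    rw [hCdef] at hc
    exact hv₀S (by rwa [delAdj_reach_mem hc hcS])
  -- the si are pairwise distinct, so S is covered by the paths
  have hinj : Function.Injective si := by
    intro i j hij
    by_contra hne
    have h2 : si i ∈ (p j).support := hij ▸ hsiP j
    rcases hdisj i j hne _ (hsiP i) h2 with h | ⟨h, _⟩
    · exact hx (h ▸ hsiS i)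
    · exact hCS _ (hends i) (h ▸ hsiS i)
  have hSrange : Set.range si = S := by
    apply Set.eq_of_subset_of_ncard_le
    · rintro w ⟨i, rfl⟩; exact hsiS i
    · rw [hS.1, ← Set.image_univ, Set.ncard_image_of_injective _ hinj, Set.ncard_univ,
        Nat.card_eq_fintype_card, Fintype.card_fin]
    · exact Set.toFinite S
  have hSPi : S ⊆ {v | ∃ i, v ∈ (p i).support} := by
    rw [← hSrange]; rintro w ⟨i, rfl⟩; exact ⟨i, hsiP i⟩
  -- main argument
  rintro Γ A hbr ⟨⟨i, u, huA, husup, s, hsS, hssup, hlt⟩, ⟨j, v, hvA, hvsup, s', hs'S, hs'sup, hlt'⟩⟩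
  have hseq : s = si i := huniq i s hsS hssup
  have hs'eq : s' = si j := huniq j s' hs'S hs'sup
  have huniqi : ∀ w ∈ S, w ∈ (p i).support → w = s :=
    fun w hw hw2 => (huniq i w hw hw2).trans hseq.symm
  have huniqj : ∀ w ∈ S, w ∈ (p j).support → w = s' :=
    fun w hw hw2 => (huniq j w hw hw2).trans hs'eq.symm
  have huS : u ∉ S := by
    intro h
    rw [huniqi u h husup] at hlt
    exact lt_irrefl _ hlt
  have hvS : v ∉ S := by
    intro h
    rw [huniqj v h hvsup] at hlt'
    exact lt_irrefl _ hlt'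
  have reach_xu : (delAdj G S).Reachable x u :=
    walk_delAdj _ (takeUntil_avoid (p i) (hp i) husup huniqi hlt)
  have reach_ve : (delAdj G S).Reachable v (ends j) :=
    walk_delAdj _ (dropUntil_avoid (p j) (hp j) hvsup huniqj hlt')
  have reach_uv : (delAdj G S).Reachable u v := by
    rcases hbr with ⟨⟨w₀, hw₀, hΓdef⟩, hA⟩ | ⟨u', v', hadj, _, _, _, hΓeq, hAeq⟩
    · have hΓS : ∀ c ∈ Γ, c ∉ S := by
        intro c hc hcS
        rw [hΓdef] at hc
        exact hw₀ (by rw [delAdj_reach_mem hc (hSPi hcS)]; exact hSPi hcS)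
      rw [hA] at huA hvA
      obtain ⟨huΓ, a, haΓ, hau⟩ := huA
      obtain ⟨hvΓ, b, hbΓ, hbv⟩ := hvA
      have hab : (delAdj G S).Reachable a b := by
        refine Reachable.mono (delAdj_mono hSPi) ?_
        have h1 := hΓdef ▸ haΓ
        have h2 := hΓdef ▸ hbΓ
        exact (h1 : (delAdj G _).Reachable w₀ a).symm.trans h2
      refine Reachable.trans (Adj.reachable ?_) (hab.trans (Adj.reachable ?_))
      · exact ⟨hau.symm, huS, hΓS a haΓ⟩
      · exact ⟨hbv, hΓS b hbΓ, hvS⟩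
    · rw [hAeq, Set.mem_insert_iff, Set.mem_singleton_iff] at huA hvA
      by_cases huv : u = v
      · exact huv ▸ Reachable.refl u
      · rcases huA with rfl | rfl <;> rcases hvA with rfl | rfl
        · exact absurd rfl huv
        · exact Adj.reachable ⟨hadj, huS, hvS⟩
        · exact Adj.reachable ⟨hadj.symm, huS, hvS⟩
        · exact absurd rfl huv
  apply hxC
  rw [hCdef]
  have hej : (delAdj G S).Reachable v₀ (ends j) := by
    have := hends j; rwa [hCdef] at this
  exact hej.trans (reach_ve.symm.trans (reach_uv.symm.trans reach_xu.symm))
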